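/- Let m ≥ 1 and let γ : [0,1] → {2m×2m real symplectic matrices} be continuous with γ(0) = I_{2m}. Then for every ε > 0 there exists N₀ ∈ ℕ such that for every N ≥ N₀, setting h = 1/N and t_n = n/N, the following holds for each n ∈ {0, 1, …, N−1}: there exist m×m real matrices A_n, C_n, D_n with A_nᵀ = A_n, D_nᵀ = D_n, I_m + hC_nᵀ invertible, γ(t_{n+1})·γ(t_n)⁻¹ = S_h(A_n, C_n, D_n), and max(‖hA_n‖, ‖hC_n‖, ‖hD_n‖) ≤ ε. In particular, every continuous symplectic path starting at the identity agrees at the nodes t_n with the fundamental solution of a discrete linear Hamiltonian system with symmetric coefficient matrices B_n = [[A_n, C_n],[C_nᵀ, D_n]]. -/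

import Mathlib

open Matrix
open scoped Matrix.Norms.L2Operator

/-- The standard symplectic matrix `J = [[0, -I_m],[I_m, 0]]` in `m × m` blocks. -/
def Jmat (m : ℕ) : Matrix (Fin m ⊕ Fin m) (Fin m ⊕ Fin m) ℝ :=
  Matrix.fromBlocks 0 (-1) 1 0

/-- A `2m × 2m` real matrix `M` is symplectic iff `Mᵀ * J * M = J`. -/
def IsSymplectic {m : ℕ} (M : Matrix (Fin m ⊕ Fin m) (Fin m ⊕ Fin m) ℝ) : Prop :=
  Mᵀ * Jmat m * M = Jmat m

/-- The matrix `S_h(A,C,D)` with blocks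
`[[(I+hCᵀ)⁻¹, −h(I+hCᵀ)⁻¹D],[hA(I+hCᵀ)⁻¹, −h²A(I+hCᵀ)⁻¹D + I + hC]]`. -/
noncomputable def Sh (m : ℕ) (h : ℝ) (A C D : Matrix (Fin m) (Fin m) ℝ) :
    Matrix (Fin m ⊕ Fin m) (Fin m ⊕ Fin m) ℝ :=
  Matrix.fromBlocks (1 + h • Cᵀ)⁻¹ (-(h • ((1 + h • Cᵀ)⁻¹ * D)))
    (h • (A * (1 + h • Cᵀ)⁻¹)) (-((h ^ 2) • (A * (1 + h • Cᵀ)⁻¹ * D)) + 1 + h • C)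

lemma norm_transpose_l2 {k l : Type*} [Fintype k] [Fintype l] [DecidableEq k] [DecidableEq l]
    (A : Matrix k l ℝ) : ‖Aᵀ‖ = ‖A‖ := by
  have h : Aᴴ = Aᵀ := by ext i j; simp [conjTranspose_apply]
  rw [← h, Matrix.l2_opNorm_conjTranspose]

lemma norm_one_l2 {n : Type*} [Fintype n] [DecidableEq n] [Nonempty n] :
    ‖(1 : Matrix n n ℝ)‖ = 1 := by
  have h := Matrix.l2_opNorm_conjTranspose_mul_self (1 : Matrix n n ℝ)
  simp only [conjTranspose_one, one_mul] at h
  have hne : (1 : Matrix n n ℝ) ≠ 0 := by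
    intro hc
    have := congrFun (congrFun hc (Classical.arbitrary n)) (Classical.arbitrary n)
    simp [Matrix.one_apply] at this
  have hpos : 0 < ‖(1 : Matrix n n ℝ)‖ := norm_pos_iff.mpr hne
  nlinarith

lemma norm_submatrix_le {k n : Type*} [Fintype k] [Fintype n] [DecidableEq k] [DecidableEq n]
    [Nonempty n]
    (X : Matrix k k ℝ) (f g : n → k) (hf : Function.Injective f) (hg : Function.Injective g) :
    ‖X.submatrix f g‖ ≤ ‖X‖ := by
  set U : Matrix n k ℝ := (1 : Matrix k k ℝ).submatrix f id with hU
  set V : Matrix n k ℝ := (1 : Matrix k k ℝ).submatrix g id with hV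
  have hXV : X * Vᴴ = X.submatrix id g := by
    ext i j
    simp [hV, Matrix.mul_apply, Matrix.one_apply, conjTranspose_apply, eq_comm]
  have hcomb : U * X * Vᴴ = X.submatrix f g := by
    rw [Matrix.mul_assoc, hXV]
    ext i j
    simp [hU, Matrix.mul_apply, Matrix.one_apply]
  have hUU : U * Uᴴ = 1 := by
    ext i j
    simp [hU, Matrix.mul_apply, Matrix.one_apply, conjTranspose_apply, hf.eq_iff]
  have hVV : V * Vᴴ = 1 := by
    ext i j
    simp [hV, Matrix.mul_apply, Matrix.one_apply, conjTranspose_apply, hg.eq_iff]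
  have hnU : ‖U‖ = 1 := by
    have h1 : ‖(Uᴴ)ᴴ * Uᴴ‖ = ‖Uᴴ‖ * ‖Uᴴ‖ := Matrix.l2_opNorm_conjTranspose_mul_self Uᴴ
    rw [conjTranspose_conjTranspose, hUU, norm_one_l2] at h1
    have h2 : ‖Uᴴ‖ = ‖U‖ := Matrix.l2_opNorm_conjTranspose U
    nlinarith [norm_nonneg U]
  have hnV : ‖Vᴴ‖ = 1 := by
    have h1 : ‖(Vᴴ)ᴴ * Vᴴ‖ = ‖Vᴴ‖ * ‖Vᴴ‖ := Matrix.l2_opNorm_conjTranspose_mul_self Vᴴ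
    rw [conjTranspose_conjTranspose, hVV, norm_one_l2] at h1
    nlinarith [norm_nonneg Vᴴ]
  calc ‖X.submatrix f g‖ = ‖U * X * Vᴴ‖ := by rw [hcomb]
    _ ≤ ‖U * X‖ * ‖Vᴴ‖ := Matrix.l2_opNorm_mul _ _
    _ ≤ ‖U‖ * ‖X‖ * ‖Vᴴ‖ := by
        have := Matrix.l2_opNorm_mul U X
        have h0 : (0:ℝ) ≤ ‖Vᴴ‖ := norm_nonneg _
        nlinarith
    _ = ‖X‖ := by rw [hnU, hnV]; ring

lemma inv_facts {n : Type*} [Fintype n] [DecidableEq n] [Nonempty n]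
    (P : Matrix n n ℝ) (h : ‖1 - P‖ ≤ 1/2) :
    IsUnit P ∧ IsUnit P.det ∧ ‖P⁻¹‖ ≤ 2 ∧ ‖P⁻¹ - 1‖ ≤ 2 * ‖1 - P‖ := by
  have hlt : ‖1 - P‖ < 1 := lt_of_le_of_lt h (by norm_num)
  have hu : IsUnit P := by
    have := (Units.oneSub (1 - P) hlt).isUnit
    simpa using this
  have hdet : IsUnit P.det := (Matrix.isUnit_iff_isUnit_det P).mp hu
  have hPiP : P⁻¹ * P = 1 := Matrix.nonsing_inv_mul P hdet
  have hinv : P⁻¹ = 1 + P⁻¹ * (1 - P) := by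
    rw [mul_sub, mul_one, hPiP]
    abel
  have hb : ‖P⁻¹‖ ≤ 1 + ‖P⁻¹‖ * (1/2) := by
    calc ‖P⁻¹‖ = ‖1 + P⁻¹ * (1 - P)‖ := by rw [← hinv]
      _ ≤ ‖(1 : Matrix n n ℝ)‖ + ‖P⁻¹ * (1 - P)‖ := norm_add_le _ _
      _ ≤ 1 + ‖P⁻¹‖ * ‖1 - P‖ := by
          rw [norm_one_l2]
          exact add_le_add le_rfl (norm_mul_le _ _)
      _ ≤ 1 + ‖P⁻¹‖ * (1/2) := by
          have := norm_nonneg P⁻¹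
          nlinarith
  have h2 : ‖P⁻¹‖ ≤ 2 := by linarith
  refine ⟨hu, hdet, h2, ?_⟩
  have hsub : P⁻¹ - 1 = P⁻¹ * (1 - P) := by rw [mul_sub, mul_one, hPiP]
  rw [hsub]
  calc ‖P⁻¹ * (1 - P)‖ ≤ ‖P⁻¹‖ * ‖1 - P‖ := norm_mul_le _ _
    _ ≤ 2 * ‖1 - P‖ := by
        have := norm_nonneg (1 - P)
        nlinarith

lemma key (m : ℕ) (hm : 1 ≤ m) {ε h : ℝ} (hε : 0 < ε) (hh : h ≠ 0)
    (M : Matrix (Fin m ⊕ Fin m) (Fin m ⊕ Fin m) ℝ)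
    (hs : IsSymplectic M) (hnorm : ‖M - 1‖ ≤ min (1/2) (ε/2)) :
    ∃ A C D : Matrix (Fin m) (Fin m) ℝ,
      Aᵀ = A ∧ Dᵀ = D ∧ IsUnit (1 + h • Cᵀ) ∧ M = Sh m h A C D ∧
      ‖h • A‖ ≤ ε ∧ ‖h • C‖ ≤ ε ∧ ‖h • D‖ ≤ ε := by
  haveI : Nonempty (Fin m) := ⟨⟨0, hm⟩⟩
  -- block equations from symplecticity
  have hmem : M ∈ Matrix.symplecticGroup (Fin m) ℝ := by
    rw [SymplecticGroup.mem_iff']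
    exact hs
  have hJ2 : M * Matrix.J (Fin m) ℝ * Mᵀ = Matrix.J (Fin m) ℝ := SymplecticGroup.mem_iff.mp hmem
  have hJ1 : Mᵀ * Matrix.J (Fin m) ℝ * M = Matrix.J (Fin m) ℝ := hs
  set P := M.toBlocks₁₁ with hPdef
  set Q := M.toBlocks₁₂ with hQdef
  set R := M.toBlocks₂₁ with hRdef
  set S := M.toBlocks₂₂ with hSdef
  have hMb : M = fromBlocks P Q R S := (fromBlocks_toBlocks M).symm
  rw [hMb] at hJ1 hJ2
  simp only [Matrix.J, fromBlocks_transpose, fromBlocks_multiply] at hJ1 hJ2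
  simp only [Matrix.mul_zero, Matrix.zero_mul, Matrix.mul_one, Matrix.one_mul,
    Matrix.mul_neg, Matrix.neg_mul, zero_add, add_zero, neg_zero] at hJ1 hJ2
  rw [Matrix.fromBlocks_inj] at hJ1 hJ2
  obtain ⟨e11, e12, -, -⟩ := hJ1
  obtain ⟨f11, -, -, -⟩ := hJ2
  have hsym : Rᵀ * P = Pᵀ * R := sub_eq_zero.mp (by rwa [← sub_eq_add_neg] at e11)
  have hQP : Q * Pᵀ = P * Qᵀ := sub_eq_zero.mp (by rwa [← sub_eq_add_neg] at f11)
  have hPS : Pᵀ * S = 1 + Rᵀ * Q := by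
    have e12' : Rᵀ * Q - Pᵀ * S = -1 := by rwa [← sub_eq_add_neg] at e12
    have := sub_eq_iff_eq_add.mp e12'
    rw [this]
    abel
  -- norm estimates on blocks
  have hone : ((1 : Matrix (Fin m ⊕ Fin m) (Fin m ⊕ Fin m) ℝ)).submatrix
      (Sum.inl : Fin m → Fin m ⊕ Fin m) Sum.inl = 1 := by
    ext i j; simp [Matrix.one_apply]
  have hzero : ((1 : Matrix (Fin m ⊕ Fin m) (Fin m ⊕ Fin m) ℝ)).submatrix
      (Sum.inl : Fin m → Fin m ⊕ Fin m) (Sum.inr : Fin m → Fin m ⊕ Fin m) = 0 := by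
    ext i j; simp [Matrix.one_apply]
  have hzero' : ((1 : Matrix (Fin m ⊕ Fin m) (Fin m ⊕ Fin m) ℝ)).submatrix
      (Sum.inr : Fin m → Fin m ⊕ Fin m) (Sum.inl : Fin m → Fin m ⊕ Fin m) = 0 := by
    ext i j; simp [Matrix.one_apply]
  have hnorm' : ‖(1 : Matrix (Fin m ⊕ Fin m) (Fin m ⊕ Fin m) ℝ) - M‖ ≤ min (1/2) (ε/2) := by
    rwa [norm_sub_rev]
  have hP : ‖1 - P‖ ≤ min (1/2) (ε/2) := by
    have : (1 : Matrix (Fin m ⊕ Fin m) (Fin m ⊕ Fin m) ℝ) - M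
        = fromBlocks (1 - P) (-Q) (-R) (1 - S) := by
      rw [hMb]
      ext (i | i) (j | j) <;>
        simp [Matrix.sub_apply, Matrix.one_apply, Matrix.fromBlocks]
    have hsub : (1 - P) = ((1 : Matrix (Fin m ⊕ Fin m) (Fin m ⊕ Fin m) ℝ) - M).submatrix
        Sum.inl Sum.inl := by
      rw [this]; rfl
    calc ‖1 - P‖ = ‖((1 : Matrix (Fin m ⊕ Fin m) (Fin m ⊕ Fin m) ℝ) - M).submatrix
          Sum.inl Sum.inl‖ := by rw [← hsub]
      _ ≤ ‖(1 : Matrix (Fin m ⊕ Fin m) (Fin m ⊕ Fin m) ℝ) - M‖ :=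
          norm_submatrix_le _ _ _ Sum.inl_injective Sum.inl_injective
      _ ≤ _ := hnorm'
  have hQn : ‖Q‖ ≤ min (1/2) (ε/2) := by
    have hsub : Q = (M - 1).submatrix Sum.inl Sum.inr := by
      rw [hMb]
      ext i j
      simp [Matrix.sub_apply, Matrix.one_apply, Matrix.fromBlocks]
    calc ‖Q‖ = ‖(M - 1).submatrix Sum.inl Sum.inr‖ := by rw [← hsub]
      _ ≤ ‖M - 1‖ := norm_submatrix_le _ _ _ Sum.inl_injective Sum.inr_injective
      _ ≤ _ := hnorm
  have hRn : ‖R‖ ≤ min (1/2) (ε/2) := by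
    have hsub : R = (M - 1).submatrix Sum.inr Sum.inl := by
      rw [hMb]
      ext i j
      simp [Matrix.sub_apply, Matrix.one_apply, Matrix.fromBlocks]
    calc ‖R‖ = ‖(M - 1).submatrix Sum.inr Sum.inl‖ := by rw [← hsub]
      _ ≤ ‖M - 1‖ := norm_submatrix_le _ _ _ Sum.inr_injective Sum.inl_injective
      _ ≤ _ := hnorm
  obtain ⟨huP, hdet, hPinv2, hPinvd⟩ := inv_facts P (le_trans hP (min_le_left _ _))
  have hdetT : IsUnit Pᵀ.det := by rwa [Matrix.det_transpose]
  -- key algebraic identities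
  have hRP : (Pᵀ)⁻¹ * Rᵀ = R * P⁻¹ := by
    have h1 : Pᵀ * R * P⁻¹ = Rᵀ := by
      rw [← hsym, Matrix.mul_nonsing_inv_cancel_right _ _ hdet]
    rw [← h1, ← Matrix.mul_assoc, ← Matrix.mul_assoc, Matrix.nonsing_inv_mul _ hdetT,
      Matrix.one_mul]
  have hQPi : Qᵀ * (Pᵀ)⁻¹ = P⁻¹ * Q := by
    have h1 : P⁻¹ * (Q * Pᵀ) = Qᵀ := by
      rw [hQP, ← Matrix.mul_assoc, Matrix.nonsing_inv_mul _ hdet, Matrix.one_mul]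
    rw [← h1, Matrix.mul_assoc, Matrix.mul_assoc, Matrix.mul_nonsing_inv _ hdetT,
      Matrix.mul_one]
  have hSval : S = R * P⁻¹ * Q + (Pᵀ)⁻¹ := by
    have h1 : S = (Pᵀ)⁻¹ * (1 + Rᵀ * Q) := by
      rw [← hPS, ← Matrix.mul_assoc, Matrix.nonsing_inv_mul _ hdetT, Matrix.one_mul]
    rw [h1, Matrix.mul_add, Matrix.mul_one, ← Matrix.mul_assoc, hRP]
    abel
  -- the data
  refine ⟨h⁻¹ • (R * P⁻¹), h⁻¹ • (P⁻¹ - 1)ᵀ, h⁻¹ • (-(P⁻¹ * Q)), ?_, ?_, ?_, ?_, ?_, ?_, ?_⟩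
  · rw [Matrix.transpose_smul, Matrix.transpose_mul, Matrix.transpose_nonsing_inv, hRP]
  · rw [Matrix.transpose_smul, Matrix.transpose_neg, Matrix.transpose_mul,
      Matrix.transpose_nonsing_inv, hQPi]
  · have hC : 1 + h • (h⁻¹ • (P⁻¹ - 1)ᵀ)ᵀ = P⁻¹ := by
      rw [Matrix.transpose_smul, Matrix.transpose_transpose, smul_smul,
        mul_inv_cancel₀ hh, one_smul]
      abel
    rw [hC]
    exact (Matrix.isUnit_iff_isUnit_det _).mpr (Matrix.isUnit_nonsing_inv_det P hdet)
  · rw [hMb, Sh]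
    have hC : 1 + h • (h⁻¹ • (P⁻¹ - 1)ᵀ)ᵀ = P⁻¹ := by
      rw [Matrix.transpose_smul, Matrix.transpose_transpose, smul_smul,
        mul_inv_cancel₀ hh, one_smul]
      abel
    rw [hC, Matrix.nonsing_inv_nonsing_inv P hdet, Matrix.fromBlocks_inj]
    refine ⟨rfl, ?_, ?_, ?_⟩
    · rw [Matrix.mul_smul, smul_smul, mul_inv_cancel₀ hh, one_smul, Matrix.mul_neg,
        Matrix.mul_nonsing_inv_cancel_left _ _ hdet, neg_neg]
    · rw [Matrix.smul_mul, smul_smul, mul_inv_cancel₀ hh, one_smul,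
        Matrix.nonsing_inv_mul_cancel_right _ _ hdet]
    · have e : (h ^ 2) • ((h⁻¹ • (R * P⁻¹)) * P * (h⁻¹ • (-(P⁻¹ * Q))))
          = (R * P⁻¹) * P * (-(P⁻¹ * Q)) := by
        simp only [Matrix.smul_mul, Matrix.mul_smul, smul_smul]
        have hsc : h ^ 2 * (h⁻¹ * h⁻¹) = 1 := by field_simp
        rw [hsc, one_smul]
      rw [e, smul_smul, mul_inv_cancel₀ hh, one_smul,
        Matrix.nonsing_inv_mul_cancel_right _ _ hdet, Matrix.mul_neg, neg_neg,
        Matrix.transpose_sub, Matrix.transpose_one, Matrix.transpose_nonsing_inv,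
        hSval, ← Matrix.mul_assoc]
      abel
  · rw [smul_smul, mul_inv_cancel₀ hh, one_smul]
    calc ‖R * P⁻¹‖ ≤ ‖R‖ * ‖P⁻¹‖ := norm_mul_le _ _
      _ ≤ (ε/2) * 2 := by
          have h1 : ‖R‖ ≤ ε/2 := le_trans hRn (min_le_right _ _)
          have := norm_nonneg R
          nlinarith
      _ = ε := by ring
  · rw [smul_smul, mul_inv_cancel₀ hh, one_smul, norm_transpose_l2]
    have : ‖P⁻¹ - 1‖ ≤ 2 * ‖1 - P‖ := hPinvd
    have h1 : ‖1 - P‖ ≤ ε/2 := le_trans hP (min_le_right _ _)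
    linarith
  · rw [smul_smul, mul_inv_cancel₀ hh, one_smul, norm_neg]
    calc ‖P⁻¹ * Q‖ ≤ ‖P⁻¹‖ * ‖Q‖ := norm_mul_le _ _
      _ ≤ 2 * (ε/2) := by
          have h1 : ‖Q‖ ≤ ε/2 := le_trans hQn (min_le_right _ _)
          have := norm_nonneg Q
          nlinarith
      _ = ε := by ring

/-- every continuous symplectic path starting at the identity can be
interpolated, at the nodes `t_n = n/N` for `N` large, by discrete transition matrices
`S_h(A_n, C_n, D_n)` with symmetric data which is small of order `ε`; the norm `‖·‖`
is the `L²`-operator norm on matrices. -/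
theorem stmt17 (m : ℕ) (hm : 1 ≤ m)
    (γ : ℝ → Matrix (Fin m ⊕ Fin m) (Fin m ⊕ Fin m) ℝ)
    (hγcont : ContinuousOn γ (Set.Icc (0 : ℝ) 1))
    (hγ0 : γ 0 = 1)
    (hγsymp : ∀ t ∈ Set.Icc (0 : ℝ) 1, IsSymplectic (γ t)) :
    ∀ ε > (0 : ℝ), ∃ N₀ : ℕ, ∀ N : ℕ, N₀ ≤ N → ∀ n : ℕ, n < N →
      ∃ A C D : Matrix (Fin m) (Fin m) ℝ,
        Aᵀ = A ∧ Dᵀ = D ∧ IsUnit (1 + (1 / (N : ℝ)) • Cᵀ) ∧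
        γ (((n : ℝ) + 1) / N) * (γ ((n : ℝ) / N))⁻¹ = Sh m (1 / (N : ℝ)) A C D ∧
        ‖(1 / (N : ℝ)) • A‖ ≤ ε ∧ ‖(1 / (N : ℝ)) • C‖ ≤ ε ∧ ‖(1 / (N : ℝ)) • D‖ ≤ ε := by
  intro ε hε
  haveI : Nonempty (Fin m) := ⟨⟨0, hm⟩⟩
  set ε' : ℝ := min (1/2) (ε/2) with hε'def
  have hε' : 0 < ε' := lt_min (by norm_num) (by linarith)
  have hmem : ∀ t ∈ Set.Icc (0:ℝ) 1, γ t ∈ Matrix.symplecticGroup (Fin m) ℝ := by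
    intro t ht
    rw [SymplecticGroup.mem_iff']
    exact hγsymp t ht
  have hdetγ : ∀ t ∈ Set.Icc (0:ℝ) 1, IsUnit (γ t).det := fun t ht =>
    SymplecticGroup.symplectic_det (hmem t ht)
  set K : Set (ℝ × ℝ) := Set.Icc (0:ℝ) 1 ×ˢ Set.Icc (0:ℝ) 1 with hKdef
  set g : ℝ × ℝ → Matrix (Fin m ⊕ Fin m) (Fin m ⊕ Fin m) ℝ :=
    fun p => γ p.1 * Ring.inverse (γ p.2) with hgdef
  have hgcont : ContinuousOn g K := by
    apply ContinuousOn.mul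
    · exact hγcont.comp continuousOn_fst (fun p hp => hp.1)
    · intro p hp
      have hu : IsUnit (γ p.2) :=
        (Matrix.isUnit_iff_isUnit_det _).mpr (hdetγ p.2 hp.2)
      have hcont : ContinuousAt Ring.inverse (γ p.2) := by
        have := NormedRing.inverse_continuousAt hu.unit
        simpa using this
      have hsnd : ContinuousWithinAt (fun q : ℝ × ℝ => γ q.2) K p :=
        (hγcont.comp continuousOn_snd (fun q hq => hq.2)) p hp
      have hres := ContinuousAt.comp_continuousWithinAt
        (f := fun q : ℝ × ℝ => γ q.2) (x := p) hcont hsnd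
      simpa [Function.comp_def] using hres
  have hucont := (isCompact_Icc.prod isCompact_Icc).uniformContinuousOn_of_continuous hgcont
  obtain ⟨δ, hδpos, hδ⟩ := Metric.uniformContinuousOn_iff.mp hucont ε' hε'
  obtain ⟨K₀, hK₀⟩ := exists_nat_gt (1/δ)
  refine ⟨K₀ + 1, fun N hN n hn => ?_⟩
  have hN1 : 1 ≤ N := le_trans (Nat.le_add_left 1 K₀) hN
  have hNpos : (0:ℝ) < N := by exact_mod_cast Nat.pos_of_ne_zero (by omega)
  have hNne : (N:ℝ) ≠ 0 := ne_of_gt hNpos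
  have hh : (1 / (N:ℝ)) ≠ 0 := one_div_ne_zero hNne
  have hn1 : ((n:ℝ)/N) ∈ Set.Icc (0:ℝ) 1 := by
    constructor
    · positivity
    · rw [div_le_one hNpos]
      exact_mod_cast le_of_lt hn
  have hn2 : (((n:ℝ)+1)/N) ∈ Set.Icc (0:ℝ) 1 := by
    constructor
    · positivity
    · rw [div_le_one hNpos]
      have : (n:ℝ) + 1 = ((n+1 : ℕ) : ℝ) := by push_cast; ring
      rw [this]
      exact_mod_cast Nat.succ_le_of_lt hn
  set x : ℝ × ℝ := ((((n:ℝ)+1))/N, (n:ℝ)/N) with hxdef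
  set y : ℝ × ℝ := ((n:ℝ)/N, (n:ℝ)/N) with hydef
  have hxK : x ∈ K := ⟨hn2, hn1⟩
  have hyK : y ∈ K := ⟨hn1, hn1⟩
  have h1N : 1/(N:ℝ) < δ := by
    have hKN : (1:ℝ)/δ < N := by
      have h1 : ((K₀:ℝ)) ≤ N := by
        have : (K₀ : ℕ) ≤ N := by omega
        exact_mod_cast this
      linarith
    rw [div_lt_iff₀ hNpos]
    have := (div_lt_iff₀ hδpos).mp hKN
    nlinarith
  have hdistxy : dist x y < δ := by
    rw [Prod.dist_eq]
    simp only [hxdef, hydef, dist_self]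
    rw [max_eq_left dist_nonneg, Real.dist_eq]
    have hstep : ((n:ℝ)+1)/N - (n:ℝ)/N = 1/N := by
      field_simp
      ring
    rw [hstep, abs_of_pos (by positivity)]
    exact h1N
  have hclose := hδ x hxK y hyK hdistxy
  have hgy : g y = 1 := by
    simp only [hgdef]
    exact Ring.mul_inverse_cancel _ ((Matrix.isUnit_iff_isUnit_det _).mpr (hdetγ _ hn1))
  have hgx : g x = γ (((n:ℝ)+1)/N) * (γ ((n:ℝ)/N))⁻¹ := by
    simp only [hgdef]
    rw [Matrix.nonsing_inv_eq_ringInverse]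
  have hM : ‖γ (((n:ℝ)+1)/N) * (γ ((n:ℝ)/N))⁻¹ - 1‖ ≤ ε' := by
    rw [← hgx, ← hgy, ← dist_eq_norm]
    exact le_of_lt hclose
  have hMmem : γ (((n:ℝ)+1)/N) * (γ ((n:ℝ)/N))⁻¹ ∈ Matrix.symplecticGroup (Fin m) ℝ := by
    have h1 := hmem _ hn2
    have h2 := hmem _ hn1
    rw [SymplecticGroup.inv_eq_symplectic_inv _ h2]
    exact mul_mem h1 (mul_mem (mul_mem (SymplecticGroup.neg_mem (SymplecticGroup.J_mem (Fin m) ℝ))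
      (SymplecticGroup.transpose_mem h2)) (SymplecticGroup.J_mem (Fin m) ℝ))
  have hMs : IsSymplectic (γ (((n:ℝ)+1)/N) * (γ ((n:ℝ)/N))⁻¹) :=
    SymplecticGroup.mem_iff'.mp hMmem
  exact key m hm hε hh _ hMs hM
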